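/- arXiv:1707.02191 — 2 statements merged into one kernel-verified Lean document; each statement's English description precedes it below -/
import Mathlib

section
/- Let ψ ∈ L¹(ℝ³,ℂ) ∩ L²(ℝ³,ℂ), let n ↦ R_n be a measurable choice of rotations R_n ∈ SO(3) with R_n e_z = n, and let f ∈ L¹(ℝ³,ℂ) ∩ L²(ℝ³,ℂ). Then for almost every ω ∈ ℝ³ the Fourier-domain reconstruction identity holds: ∫_{S²} (𝓕ψ)(R_nᵀω) · 𝓕[x ↦ (W_ψ f)(x,n)](ω) dσ(n) = M_ψ(ω) (𝓕f)(ω). In particular, if δ ≤ M_ψ ≤ M on the support of 𝓕f for some δ, M > 0, then 𝓕f, and hence f, is recovered exactly from W_ψ f by dividing this integral by M_ψ. -/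
open MeasureTheory Real

noncomputable section

/-- 3D Euclidean space. -/
abbrev R3 : Type := EuclideanSpace ℝ (Fin 3)

/-- The unit sphere `S² ⊂ ℝ³`. -/
abbrev S2 : Type := Metric.sphere (0 : R3) 1

/-- The surface measure `σ` on the unit sphere `S²`. -/
def σS2 : Measure S2 := (volume : Measure R3).toSphere

/-- The unit vector `e_z`. -/
def ez : R3 := EuclideanSpace.single 2 1

/-- The orientation score transform
`(W_ψ f)(x,n) = ∫ conj(ψ(R_nᵀ(x'-x))) f(x') dx'`, where `R_nᵀ = R_n⁻¹ = (Rn n).symm`. -/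
def OScore (Rn : S2 → (R3 ≃ₗᵢ[ℝ] R3)) (ψ f : R3 → ℂ) (x : R3) (n : S2) : ℂ :=
  ∫ x', (starRingEnd ℂ) (ψ ((Rn n).symm (x' - x))) * f x'

/-- `M_ψ(ω) = ∫_{S²} |𝓕ψ(R_nᵀ ω)|² dσ(n)`. -/
def Mpsi (Rn : S2 → (R3 ≃ₗᵢ[ℝ] R3)) (ψ : R3 → ℂ) (ω : R3) : ℝ :=
  ∫ n, ‖FourierTransform.fourier ψ ((Rn n).symm ω)‖ ^ 2 ∂σS2

/-- `N_ψ(ω) = ∫_{S²} 𝓕ψ(R_nᵀ ω) dσ(n)`. -/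
def Npsi (Rn : S2 → (R3 ≃ₗᵢ[ℝ] R3)) (ψ : R3 → ℂ) (ω : R3) : ℂ :=
  ∫ n, FourierTransform.fourier ψ ((Rn n).symm ω) ∂σS2

section Helpers
open Complex FourierTransform
open scoped RealInnerProductSpace

lemma integral_cplx_ofReal {α : Type*} [MeasurableSpace α] {μ : Measure α} (h : α → ℝ) :
    ∫ a, ((h a : ℝ) : ℂ) ∂μ = ((∫ a, h a ∂μ : ℝ) : ℂ) := integral_ofReal

local notation "e" => fun t : ℝ => (Real.fourierChar t : ℂ)

lemma conj_e (t : ℝ) : (starRingEnd ℂ) (e t) = e (-t) := by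
  simp only [Real.fourierChar_apply, ← Complex.exp_conj, map_mul, Complex.conj_I,
    Complex.conj_ofReal, map_ofNat, Complex.ofReal_mul, Complex.ofReal_ofNat]
  congr 1
  push_cast
  ring

lemma e_mul (a b : ℝ) : e a * e b = e (a + b) := by
  rw [← Circle.coe_mul, ← AddChar.map_add_eq_mul]

lemma norm_e (t : ℝ) : ‖e t‖ = 1 := by
  exact Circle.norm_coe _

lemma integrable_conj_comp {h : R3 → ℂ} (hh : Integrable h) :
    Integrable (fun y => (starRingEnd ℂ) (h y)) := by
  have := Complex.conjCLE.toContinuousLinearMap.integrable_comp hh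
  simpa using this

lemma key_cross (g f : R3 → ℂ) (hg : Integrable g) (hf : Integrable f) (ω : R3) :
    FourierTransform.fourier (fun x => ∫ x', (starRingEnd ℂ) (g (x' - x)) * f x') ω
      = (starRingEnd ℂ) (FourierTransform.fourier g ω) * FourierTransform.fourier f ω := by
  have h1 : Integrable (fun y : R3 => (starRingEnd ℂ) (g (-y))) :=
    integrable_conj_comp hg.comp_neg
  have base := hf.convolution_integrand (ContinuousLinearMap.mul ℂ ℂ) h1
    (μ := (volume : Measure R3)) (ν := (volume : Measure R3))
  -- base : Integrable (fun p : R3 × R3 => f p.2 * conj (g (-(p.1 - p.2))))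
  have base' : Integrable (fun p : R3 × R3 => (starRingEnd ℂ) (g (p.2 - p.1)) * f p.2)
      ((volume : Measure R3).prod volume) := by
    have : (fun p : R3 × R3 => (starRingEnd ℂ) (g (p.2 - p.1)) * f p.2)
        = fun p : R3 × R3 => (ContinuousLinearMap.mul ℂ ℂ) (f p.2)
            ((fun y : R3 => (starRingEnd ℂ) (g (-y))) (p.1 - p.2)) := by
      funext p; simp [neg_sub, mul_comm]
    rw [this]; exact base
  have hP : Integrable (fun p : R3 × R3 =>
      e (-⟪p.1, ω⟫) * ((starRingEnd ℂ) (g (p.2 - p.1)) * f p.2))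
      ((volume : Measure R3).prod volume) := by
    refine base'.norm.mono' ?_ ?_
    · refine (Continuous.aestronglyMeasurable ?_).mul base'.aestronglyMeasurable
      exact continuous_subtype_val.comp
        (Real.continuous_fourierChar.comp ((continuous_fst.inner continuous_const).neg))
    · filter_upwards with p
      rw [norm_mul, norm_e, one_mul]
  rw [Real.fourier_eq]
  simp_rw [Circle.smul_def, smul_eq_mul, ← integral_const_mul]
  rw [integral_integral_swap hP]
  have inner_eq : ∀ x' : R3,
      (∫ x : R3, e (-⟪x, ω⟫) * ((starRingEnd ℂ) (g (x' - x)) * f x'))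
        = (starRingEnd ℂ) (FourierTransform.fourier g ω) * (e (-⟪x', ω⟫) * f x') := by
    intro x'
    have hpt : ∀ x : R3, e (-⟪x, ω⟫) * ((starRingEnd ℂ) (g (x' - x)) * f x')
        = ((fun u : R3 => e ⟪u, ω⟫ * (starRingEnd ℂ) (g u)) (x' - x))
            * (e (-⟪x', ω⟫) * f x') := by
      intro x
      have h1 : e ⟪x' - x, ω⟫ * e (-⟪x', ω⟫) = e (-⟪x, ω⟫) := by
        rw [e_mul]; congr 1
        rw [inner_sub_left]; ring
      rw [← h1]; ring
    simp_rw [hpt]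
    rw [integral_mul_const,
      MeasureTheory.integral_sub_left_eq_self
        (fun u : R3 => e ⟪u, ω⟫ * (starRingEnd ℂ) (g u)) volume x']
    congr 1
    rw [Real.fourier_eq, ← integral_conj]
    congr 1; funext u
    rw [Circle.smul_def, smul_eq_mul, map_mul, conj_e, neg_neg]
  simp_rw [inner_eq]
  rw [integral_const_mul]
  rw [Real.fourier_eq]
  simp_rw [Circle.smul_def, smul_eq_mul]
  congr 1

end Helpers

/-- Fourier-domain reconstruction identity:
`∫_{S²} 𝓕ψ(R_nᵀω) · 𝓕[x ↦ (W_ψ f)(x,n)](ω) dσ(n) = M_ψ(ω) 𝓕f(ω)` for a.e. `ω`; in particular,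
if `δ ≤ M_ψ ≤ M` on the support of `𝓕f`, then `𝓕f` is recovered by dividing by `M_ψ`. -/
theorem orientation_score_fourier_reconstruction
    (ψ : R3 → ℂ) (hψ1 : MemLp ψ 1 (volume : Measure R3)) (hψ2 : MemLp ψ 2 (volume : Measure R3))
    (Rn : S2 → (R3 ≃ₗᵢ[ℝ] R3))
    (hdet : ∀ n : S2, LinearMap.det ((Rn n).toLinearEquiv : R3 →ₗ[ℝ] R3) = 1)
    (hRez : ∀ n : S2, Rn n ez = (n : R3))
    (hmeas : Measurable fun p : S2 × R3 => (Rn p.1).symm p.2)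
    (f : R3 → ℂ) (hf1 : MemLp f 1 (volume : Measure R3)) (hf2 : MemLp f 2 (volume : Measure R3)) :
    (∀ᵐ ω ∂(volume : Measure R3),
        ∫ n, FourierTransform.fourier ψ ((Rn n).symm ω)
              * FourierTransform.fourier (fun x => OScore Rn ψ f x n) ω ∂σS2
          = (Mpsi Rn ψ ω : ℂ) * FourierTransform.fourier f ω)
    ∧ (∀ δ M : ℝ, 0 < δ →
        (∀ ω ∈ Function.support (FourierTransform.fourier f), δ ≤ Mpsi Rn ψ ω ∧ Mpsi Rn ψ ω ≤ M) →
        ∀ᵐ ω ∂(volume : Measure R3),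
          FourierTransform.fourier f ω
            = (∫ n, FourierTransform.fourier ψ ((Rn n).symm ω)
                  * FourierTransform.fourier (fun x => OScore Rn ψ f x n) ω ∂σS2)
              / (Mpsi Rn ψ ω : ℂ)) := by
  have hψ : Integrable ψ (volume : Measure R3) := memLp_one_iff_integrable.mp hψ1
  have hf : Integrable f (volume : Measure R3) := memLp_one_iff_integrable.mp hf1
  have hgn : ∀ n : S2, Integrable (fun y : R3 => ψ ((Rn n).symm y)) (volume : Measure R3) := by
    intro n
    have hmp := (Rn n).symm.measurePreserving
    exact (hmp.integrable_comp_emb (Rn n).symm.toHomeomorph.measurableEmbedding).mpr hψ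
  have hO : ∀ (n : S2) (ω : R3),
      FourierTransform.fourier (fun x => OScore Rn ψ f x n) ω
        = (starRingEnd ℂ) (FourierTransform.fourier ψ ((Rn n).symm ω))
            * FourierTransform.fourier f ω := by
    intro n ω
    have h1 := key_cross (fun y : R3 => ψ ((Rn n).symm y)) f (hgn n) hf ω
    have h2 : FourierTransform.fourier (fun y : R3 => ψ ((Rn n).symm y)) ω
        = FourierTransform.fourier ψ ((Rn n).symm ω) :=
      Real.fourier_comp_linearIsometry (Rn n).symm ψ ω
    rw [← h2]
    exact h1
  have part1 : ∀ ω : R3,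
      ∫ n, FourierTransform.fourier ψ ((Rn n).symm ω)
          * FourierTransform.fourier (fun x => OScore Rn ψ f x n) ω ∂σS2
        = (Mpsi Rn ψ ω : ℂ) * FourierTransform.fourier f ω := by
    intro ω
    have step : ∀ n : S2,
        FourierTransform.fourier ψ ((Rn n).symm ω)
            * FourierTransform.fourier (fun x => OScore Rn ψ f x n) ω
          = ((‖FourierTransform.fourier ψ ((Rn n).symm ω)‖ ^ 2 : ℝ) : ℂ)
              * FourierTransform.fourier f ω := by
      intro n
      rw [hO n ω, ← mul_assoc, Complex.mul_conj']
      norm_cast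
    calc ∫ n, FourierTransform.fourier ψ ((Rn n).symm ω)
            * FourierTransform.fourier (fun x => OScore Rn ψ f x n) ω ∂σS2
        = ∫ n, ((‖FourierTransform.fourier ψ ((Rn n).symm ω)‖ ^ 2 : ℝ) : ℂ)
            * FourierTransform.fourier f ω ∂σS2 :=
          integral_congr_ae (Filter.Eventually.of_forall step)
      _ = ((∫ n, ‖FourierTransform.fourier ψ ((Rn n).symm ω)‖ ^ 2 ∂σS2 : ℝ) : ℂ)
            * FourierTransform.fourier f ω := by
          rw [integral_mul_const, integral_cplx_ofReal]
      _ = (Mpsi Rn ψ ω : ℂ) * FourierTransform.fourier f ω := rfl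
  refine ⟨Filter.Eventually.of_forall part1, ?_⟩
  intro δ M hδ hsupp
  refine Filter.Eventually.of_forall fun ω => ?_
  rcases eq_or_ne (FourierTransform.fourier f ω) 0 with h0 | h0
  · rw [h0, part1 ω, h0, mul_zero, zero_div]
  · have hm : (Mpsi Rn ψ ω : ℂ) ≠ 0 := by
      have hδ' := (hsupp ω (Function.mem_support.mpr h0)).1
      exact_mod_cast ne_of_gt (lt_of_lt_of_le hδ hδ')
    rw [part1 ω, mul_comm, mul_div_assoc, div_self hm, mul_one]
end
end

section
/- Let ψ ∈ L¹(ℝ³,ℂ) ∩ L²(ℝ³,ℂ), let n ↦ R_n be a measurable choice of rotations R_n ∈ SO(3) with R_n e_z = n, and let f ∈ L¹(ℝ³,ℂ) ∩ L²(ℝ³,ℂ). Define the orientation-integrated score A_ψ f (x) = ∫_{S²} (W_ψ f)(x,n) dσ(n). Then for almost every ω ∈ ℝ³ one has 𝓕[A_ψ f](ω) = conj(N_ψ(ω)) · (𝓕f)(ω), where N_ψ(ω) = ∫_{S²} (𝓕ψ)(R_nᵀ ω) dσ(n). -/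
open MeasureTheory Real

noncomputable section

open scoped FourierTransform RealInnerProductSpace ComplexConjugate ENNReal

namespace OSHelper

lemma Tpres (R : R3 ≃ₗᵢ[ℝ] R3) (c : R3) :
    MeasurePreserving (fun x : R3 => R.symm (c - x)) volume volume :=
  (R.symm.measurePreserving).comp (Measure.measurePreserving_sub_left volume c)

lemma Temb (R : R3 ≃ₗᵢ[ℝ] R3) (c : R3) :
    MeasurableEmbedding (fun x : R3 => R.symm (c - x)) :=
  ((Homeomorph.subLeft c).trans R.symm.toHomeomorph).measurableEmbedding

lemma Spres (R : R3 ≃ₗᵢ[ℝ] R3) (c : R3) :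
    MeasurePreserving (fun x : R3 => R.symm (x - c)) volume volume :=
  (R.symm.measurePreserving).comp (measurePreserving_sub_right volume c)

lemma integral_T {E : Type*} [NormedAddCommGroup E] [NormedSpace ℝ E]
    (R : R3 ≃ₗᵢ[ℝ] R3) (c : R3) (g : R3 → E) :
    ∫ x, g (R.symm (c - x)) = ∫ x, g x :=
  (Tpres R c).integral_comp (Temb R c) g

lemma lintegral_T (R : R3 ≃ₗᵢ[ℝ] R3) (c : R3) {g : R3 → ℝ≥0∞} (hg : Measurable g) :
    ∫⁻ x, g (R.symm (c - x)) = ∫⁻ x, g x :=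
  (Tpres R c).lintegral_comp hg

lemma nnnorm_circle (z : Circle) : ‖(z : ℂ)‖₊ = 1 := by
  ext
  simp [Circle.norm_coe]

lemma conj_fourierChar (θ : ℝ) :
    conj ((𝐞 θ : Circle) : ℂ) = ((𝐞 (-θ) : Circle) : ℂ) := by
  rw [AddChar.map_neg_eq_inv, Circle.coe_inv_eq_conj]



lemma lintegral_kernel (ψ f : R3 → ℂ) (hψm : Measurable ψ) (hfm : Measurable f)
    (R : R3 ≃ₗᵢ[ℝ] R3) :
    ∫⁻ p : R3 × R3, (‖ψ (R.symm (p.2 - p.1))‖₊ : ℝ≥0∞) * ‖f p.2‖₊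
        ∂((volume : Measure R3).prod volume)
      = (∫⁻ x, (‖ψ x‖₊ : ℝ≥0∞)) * ∫⁻ x, (‖f x‖₊ : ℝ≥0∞) := by
  have hψc : Measurable fun p : R3 × R3 => ψ (R.symm (p.2 - p.1)) :=
    hψm.comp (R.symm.continuous.measurable.comp (measurable_snd.sub measurable_fst))
  have hm : Measurable fun p : R3 × R3 => (‖ψ (R.symm (p.2 - p.1))‖₊ : ℝ≥0∞) * ‖f p.2‖₊ :=
    hψc.enorm.mul (hfm.comp measurable_snd).enorm
  rw [lintegral_prod _ hm.aemeasurable]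
  rw [lintegral_lintegral_swap hm.aemeasurable]
  have h1 : ∀ x' : R3, (∫⁻ x, (‖ψ (R.symm (x' - x))‖₊ : ℝ≥0∞) * ‖f x'‖₊)
      = (∫⁻ u, (‖ψ u‖₊ : ℝ≥0∞)) * ‖f x'‖₊ := by
    intro x'
    have hmx : Measurable fun x : R3 => (‖ψ (R.symm (x' - x))‖₊ : ℝ≥0∞) :=
      hψm.enorm.comp (Tpres R x').measurable
    rw [lintegral_mul_const _ hmx]
    congr 1
    exact lintegral_T R x' (hψm.enorm : Measurable fun x => (‖ψ x‖₊ : ℝ≥0∞))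
  simp_rw [h1]
  rw [lintegral_const_mul (f := fun x => (‖f x‖₊ : ℝ≥0∞)) _ hfm.enorm]

lemma integrable_K (ψ f : R3 → ℂ) (hψm : StronglyMeasurable ψ) (hfm : StronglyMeasurable f)
    (hψ1 : Integrable ψ (volume : Measure R3)) (hf1 : Integrable f (volume : Measure R3))
    (R : R3 ≃ₗᵢ[ℝ] R3) (ω : R3) :
    Integrable (fun p : R3 × R3 =>
        ((𝐞 (-⟪p.1, ω⟫) : Circle) : ℂ) * (conj (ψ (R.symm (p.2 - p.1))) * f p.2))
      ((volume : Measure R3).prod volume) := by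
  have hc : Continuous fun p : R3 × R3 => ((𝐞 (-⟪p.1, ω⟫) : Circle) : ℂ) :=
    continuous_subtype_val.comp (Real.continuous_fourierChar.comp
      ((continuous_fst.inner continuous_const).neg))
  have hψc : Measurable fun p : R3 × R3 => ψ (R.symm (p.2 - p.1)) :=
    hψm.measurable.comp (R.symm.continuous.measurable.comp (measurable_snd.sub measurable_fst))
  have hmeas : AEStronglyMeasurable (fun p : R3 × R3 =>
      ((𝐞 (-⟪p.1, ω⟫) : Circle) : ℂ) * (conj (ψ (R.symm (p.2 - p.1))) * f p.2))
      ((volume : Measure R3).prod volume) := by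
    refine (hc.measurable.mul (Measurable.mul ?_ (hfm.measurable.comp
      measurable_snd))).aestronglyMeasurable
    exact RCLike.continuous_conj.measurable.comp hψc
  refine ⟨hmeas, ?_⟩
  show (∫⁻ p, ‖_‖₊ ∂_) < ⊤
  have heq : ∀ p : R3 × R3,
      (‖((𝐞 (-⟪p.1, ω⟫) : Circle) : ℂ) * (conj (ψ (R.symm (p.2 - p.1))) * f p.2)‖₊ : ℝ≥0∞)
        = (‖ψ (R.symm (p.2 - p.1))‖₊ : ℝ≥0∞) * ‖f p.2‖₊ := by
    intro p
    simp [nnnorm_mul, nnnorm_circle]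
  calc (∫⁻ p : R3 × R3,
        (‖((𝐞 (-⟪p.1, ω⟫) : Circle) : ℂ) * (conj (ψ (R.symm (p.2 - p.1))) * f p.2)‖₊ : ℝ≥0∞)
          ∂((volume : Measure R3).prod volume))
      = ∫⁻ p : R3 × R3, (‖ψ (R.symm (p.2 - p.1))‖₊ : ℝ≥0∞) * ‖f p.2‖₊
          ∂((volume : Measure R3).prod volume) := lintegral_congr heq
    _ = (∫⁻ x, (‖ψ x‖₊ : ℝ≥0∞)) * ∫⁻ x, (‖f x‖₊ : ℝ≥0∞) :=
        lintegral_kernel ψ f hψm.measurable hfm.measurable R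
    _ < ⊤ := ENNReal.mul_lt_top hψ1.2 hf1.2



lemma fourier_conv (ψ f : R3 → ℂ) (hψm : StronglyMeasurable ψ) (hfm : StronglyMeasurable f)
    (hψ1 : Integrable ψ (volume : Measure R3)) (hf1 : Integrable f (volume : Measure R3))
    (R : R3 ≃ₗᵢ[ℝ] R3) (ω : R3) :
    (∫ x : R3, ((𝐞 (-⟪x, ω⟫) : Circle) : ℂ) * ∫ x', conj (ψ (R.symm (x' - x))) * f x')
      = conj (FourierTransform.fourier ψ (R.symm ω)) * FourierTransform.fourier f ω := by
  have hK := integrable_K ψ f hψm hfm hψ1 hf1 R ω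
  have hinner : ∀ x' : R3,
      (∫ x : R3, ((𝐞 (-⟪x, ω⟫) : Circle) : ℂ) * (conj (ψ (R.symm (x' - x))) * f x'))
        = conj (FourierTransform.fourier ψ (R.symm ω))
            * (((𝐞 (-⟪x', ω⟫) : Circle) : ℂ) * f x') := by
    intro x'
    have h1 : ∀ x : R3, ((𝐞 (-⟪x, ω⟫) : Circle) : ℂ) * (conj (ψ (R.symm (x' - x))) * f x')
        = (fun u : R3 => ((𝐞 (-⟪x' - R u, ω⟫) : Circle) : ℂ) * (conj (ψ u) * f x'))
            (R.symm (x' - x)) := by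
      intro x
      simp only [LinearIsometryEquiv.apply_symm_apply, sub_sub_cancel]
    calc ∫ x, ((𝐞 (-⟪x, ω⟫) : Circle) : ℂ) * (conj (ψ (R.symm (x' - x))) * f x')
        = ∫ x, (fun u : R3 => ((𝐞 (-⟪x' - R u, ω⟫) : Circle) : ℂ) * (conj (ψ u) * f x'))
            (R.symm (x' - x)) := by simp_rw [h1]
      _ = ∫ u, ((𝐞 (-⟪x' - R u, ω⟫) : Circle) : ℂ) * (conj (ψ u) * f x') :=
          integral_T R x' (fun u => ((𝐞 (-⟪x' - R u, ω⟫) : Circle) : ℂ) * (conj (ψ u) * f x'))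
      _ = ∫ u, (((𝐞 (-⟪x', ω⟫) : Circle) : ℂ) * f x')
            * (((𝐞 ⟪u, R.symm ω⟫ : Circle) : ℂ) * conj (ψ u)) := by
          refine integral_congr_ae (Filter.Eventually.of_forall fun u => ?_)
          beta_reduce
          have hR : ⟪R u, ω⟫ = ⟪u, R.symm ω⟫ := by
            conv_lhs => rw [← R.apply_symm_apply ω]
            rw [LinearIsometryEquiv.inner_map_map]
          have hsplit : -⟪x' - R u, ω⟫ = -⟪x', ω⟫ + ⟪u, R.symm ω⟫ := by
            rw [inner_sub_left, hR]; ring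
          rw [hsplit, AddChar.map_add_eq_mul, Circle.coe_mul]; ring
      _ = (((𝐞 (-⟪x', ω⟫) : Circle) : ℂ) * f x')
            * ∫ u, ((𝐞 ⟪u, R.symm ω⟫ : Circle) : ℂ) * conj (ψ u) := integral_const_mul _ _
      _ = conj (FourierTransform.fourier ψ (R.symm ω))
            * (((𝐞 (-⟪x', ω⟫) : Circle) : ℂ) * f x') := by
          rw [mul_comm]; congr 1
          rw [Real.fourier_eq, ← integral_conj]
          refine integral_congr_ae (Filter.Eventually.of_forall fun u => ?_)
          beta_reduce
          rw [Circle.smul_def, smul_eq_mul, map_mul, conj_fourierChar, neg_neg]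
  calc (∫ x : R3, ((𝐞 (-⟪x, ω⟫) : Circle) : ℂ) * ∫ x', conj (ψ (R.symm (x' - x))) * f x')
      = ∫ x : R3, ∫ x', ((𝐞 (-⟪x, ω⟫) : Circle) : ℂ) * (conj (ψ (R.symm (x' - x))) * f x') := by
        refine integral_congr_ae (Filter.Eventually.of_forall fun x => ?_)
        beta_reduce
        rw [integral_const_mul]
    _ = ∫ x' : R3, ∫ x, ((𝐞 (-⟪x, ω⟫) : Circle) : ℂ) * (conj (ψ (R.symm (x' - x))) * f x') :=
        integral_integral_swap hK
    _ = ∫ x' : R3, conj (FourierTransform.fourier ψ (R.symm ω))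
          * (((𝐞 (-⟪x', ω⟫) : Circle) : ℂ) * f x') := by simp_rw [hinner]
    _ = conj (FourierTransform.fourier ψ (R.symm ω))
          * ∫ x', ((𝐞 (-⟪x', ω⟫) : Circle) : ℂ) * f x' := integral_const_mul _ _
    _ = conj (FourierTransform.fourier ψ (R.symm ω)) * FourierTransform.fourier f ω := by
        rw [Real.fourier_eq]
        congr 1


instance : IsFiniteMeasure σS2 := by unfold σS2; infer_instance


lemma main_meas (ψ f : R3 → ℂ) (hψm : StronglyMeasurable ψ) (hfm : StronglyMeasurable f)
    (hψ1 : Integrable ψ (volume : Measure R3)) (hf1 : Integrable f (volume : Measure R3))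
    (Rn : S2 → (R3 ≃ₗᵢ[ℝ] R3))
    (hmeas : Measurable fun p : S2 × R3 => (Rn p.1).symm p.2) (ω : R3) :
    FourierTransform.fourier (fun x => ∫ n, OScore Rn ψ f x n ∂σS2) ω
      = conj (Npsi Rn ψ ω) * FourierTransform.fourier f ω := by
  set G : (S2 × R3) × R3 → ℂ := fun q =>
    ((𝐞 (-⟪q.1.2, ω⟫) : Circle) : ℂ)
      * (conj (ψ ((Rn q.1.1).symm (q.2 - q.1.2))) * f q.2) with hGdef
  have h1 : Measurable fun q : (S2 × R3) × R3 => (Rn q.1.1).symm (q.2 - q.1.2) :=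
    hmeas.comp ((measurable_fst.comp measurable_fst).prodMk
      (measurable_snd.sub (measurable_snd.comp measurable_fst)))
  have h2 : Continuous fun q : (S2 × R3) × R3 => ((𝐞 (-⟪q.1.2, ω⟫) : Circle) : ℂ) :=
    continuous_subtype_val.comp (Real.continuous_fourierChar.comp
      (((continuous_snd.comp continuous_fst).inner continuous_const).neg))
  have hGmble : Measurable G :=
    h2.measurable.mul ((RCLike.continuous_conj.measurable.comp
      (hψm.measurable.comp h1)).mul (hfm.measurable.comp measurable_snd))
  have hGnorm : ∀ q : (S2 × R3) × R3, (‖G q‖₊ : ℝ≥0∞)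
      = (‖ψ ((Rn q.1.1).symm (q.2 - q.1.2))‖₊ : ℝ≥0∞) * ‖f q.2‖₊ := by
    intro q
    simp [hGdef, nnnorm_mul, nnnorm_circle]
  have hGi : Integrable G ((σS2.prod volume).prod volume) := by
    refine ⟨hGmble.aestronglyMeasurable, ?_⟩
    show (∫⁻ q, ‖G q‖₊ ∂((σS2.prod volume).prod volume)) < ⊤
    have hFn : Measurable fun q : (S2 × R3) × R3 =>
        (‖ψ ((Rn q.1.1).symm (q.2 - q.1.2))‖₊ : ℝ≥0∞) * ‖f q.2‖₊ :=
      (hψm.measurable.comp h1).enorm.mul (hfm.measurable.comp measurable_snd).enorm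
    calc (∫⁻ q, ‖G q‖₊ ∂((σS2.prod volume).prod volume))
        = ∫⁻ q, (‖ψ ((Rn q.1.1).symm (q.2 - q.1.2))‖₊ : ℝ≥0∞) * ‖f q.2‖₊
            ∂((σS2.prod volume).prod volume) := lintegral_congr hGnorm
      _ = ∫⁻ p : S2 × R3, (∫⁻ x' : R3,
            (‖ψ ((Rn p.1).symm (x' - p.2))‖₊ : ℝ≥0∞) * ‖f x'‖₊) ∂(σS2.prod volume) :=
          lintegral_prod _ hFn.aemeasurable
      _ = ∫⁻ n : S2, (∫⁻ x : R3, ∫⁻ x' : R3,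
            (‖ψ ((Rn n).symm (x' - x))‖₊ : ℝ≥0∞) * ‖f x'‖₊) ∂σS2 := by
          refine lintegral_prod _ ?_
          exact (hFn.lintegral_prod_right').aemeasurable
      _ = ∫⁻ _ : S2, ((∫⁻ x, (‖ψ x‖₊ : ℝ≥0∞)) * ∫⁻ x, (‖f x‖₊ : ℝ≥0∞)) ∂σS2 := by
          refine lintegral_congr fun n => ?_
          have hmn : Measurable fun p : R3 × R3 =>
              (‖ψ ((Rn n).symm (p.2 - p.1))‖₊ : ℝ≥0∞) * ‖f p.2‖₊ :=
            (hψm.measurable.comp ((Rn n).symm.continuous.measurable.comp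
              (measurable_snd.sub measurable_fst))).enorm.mul
              (hfm.measurable.comp measurable_snd).enorm
          have h := lintegral_kernel ψ f hψm.measurable hfm.measurable (Rn n)
          rw [lintegral_prod _ hmn.aemeasurable] at h
          simpa using h
      _ = σS2 Set.univ * ((∫⁻ x, (‖ψ x‖₊ : ℝ≥0∞)) * ∫⁻ x, (‖f x‖₊ : ℝ≥0∞)) := by
          rw [lintegral_const]; ring
      _ < ⊤ := by
          refine ENNReal.mul_lt_top (measure_lt_top σS2 _) (ENNReal.mul_lt_top hψ1.2 hf1.2)
  have hH : Integrable (fun p : R3 × S2 =>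
      ((𝐞 (-⟪p.1, ω⟫) : Circle) : ℂ) * OScore Rn ψ f p.1 p.2) (volume.prod σS2) := by
    have hswap := (hGi.integral_prod_left).swap
    refine hswap.congr (Filter.Eventually.of_forall fun p => ?_)
    show (∫ x', G ((p.2, p.1), x')) = _
    simp only [hGdef]
    rw [integral_const_mul]
    rfl
  rw [Real.fourier_eq]
  calc (∫ x, 𝐞 (-⟪x, ω⟫) • ∫ n, OScore Rn ψ f x n ∂σS2)
      = ∫ x, ∫ n, ((𝐞 (-⟪x, ω⟫) : Circle) : ℂ) * OScore Rn ψ f x n ∂σS2 := by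
        refine integral_congr_ae (Filter.Eventually.of_forall fun x => ?_)
        beta_reduce
        rw [Circle.smul_def, smul_eq_mul, integral_const_mul]
    _ = ∫ n, (∫ x, ((𝐞 (-⟪x, ω⟫) : Circle) : ℂ) * OScore Rn ψ f x n) ∂σS2 :=
        integral_integral_swap hH
    _ = ∫ n, conj (FourierTransform.fourier ψ ((Rn n).symm ω)) * FourierTransform.fourier f ω ∂σS2 := by
        refine integral_congr_ae (Filter.Eventually.of_forall fun n => ?_)
        exact fourier_conv ψ f hψm hfm hψ1 hf1 (Rn n) ω
    _ = (∫ n, conj (FourierTransform.fourier ψ ((Rn n).symm ω)) ∂σS2) * FourierTransform.fourier f ω :=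
        integral_mul_const _ _
    _ = conj (Npsi Rn ψ ω) * FourierTransform.fourier f ω := by
        rw [integral_conj]
        rfl


end OSHelper

/-- The Fourier transform of the orientation-integrated score `A_ψ f` is
`conj(N_ψ(ω)) · 𝓕f(ω)` for a.e. `ω`. -/
theorem orientation_integrated_score_fourier
    (ψ : R3 → ℂ) (hψ1 : MemLp ψ 1 (volume : Measure R3)) (hψ2 : MemLp ψ 2 (volume : Measure R3))
    (Rn : S2 → (R3 ≃ₗᵢ[ℝ] R3))
    (hdet : ∀ n : S2, LinearMap.det ((Rn n).toLinearEquiv : R3 →ₗ[ℝ] R3) = 1)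
    (hRez : ∀ n : S2, Rn n ez = (n : R3))
    (hmeas : Measurable fun p : S2 × R3 => (Rn p.1).symm p.2)
    (f : R3 → ℂ) (hf1 : MemLp f 1 (volume : Measure R3)) (hf2 : MemLp f 2 (volume : Measure R3)) :
    ∀ᵐ ω ∂(volume : Measure R3),
      FourierTransform.fourier (fun x => ∫ n, OScore Rn ψ f x n ∂σS2) ω
        = (starRingEnd ℂ) (Npsi Rn ψ ω) * FourierTransform.fourier f ω := by
  classical
  set ψ' := hψ1.1.mk ψ with hψ'def
  have hψ'm : StronglyMeasurable ψ' := hψ1.1.stronglyMeasurable_mk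
  have hψe : ψ =ᵐ[(volume : Measure R3)] ψ' := hψ1.1.ae_eq_mk
  set f' := hf1.1.mk f with hf'def
  have hf'm : StronglyMeasurable f' := hf1.1.stronglyMeasurable_mk
  have hfe : f =ᵐ[(volume : Measure R3)] f' := hf1.1.ae_eq_mk
  have hψ'1 : Integrable ψ' (volume : Measure R3) :=
    (memLp_one_iff_integrable.mp hψ1).congr hψe
  have hf'1 : Integrable f' (volume : Measure R3) :=
    (memLp_one_iff_integrable.mp hf1).congr hfe
  have hFψ : ∀ ξ : R3, FourierTransform.fourier ψ ξ = FourierTransform.fourier ψ' ξ := by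
    intro ξ
    rw [Real.fourier_eq, Real.fourier_eq]
    exact integral_congr_ae (hψe.mono fun v hv => by simp only [hv])
  have hFf : ∀ ξ : R3, FourierTransform.fourier f ξ = FourierTransform.fourier f' ξ := by
    intro ξ
    rw [Real.fourier_eq, Real.fourier_eq]
    exact integral_congr_ae (hfe.mono fun v hv => by simp only [hv])
  have hN : ∀ ω : R3, Npsi Rn ψ ω = Npsi Rn ψ' ω := by
    intro ω
    unfold Npsi
    exact integral_congr_ae (Filter.Eventually.of_forall fun n => hFψ _)
  have hOS : ∀ (x : R3) (n : S2), OScore Rn ψ f x n = OScore Rn ψ' f' x n := by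
    intro x n
    unfold OScore
    have hqm : Measure.QuasiMeasurePreserving (fun x' : R3 => (Rn n).symm (x' - x))
        (volume : Measure R3) (volume : Measure R3) :=
      (OSHelper.Spres (Rn n) x).quasiMeasurePreserving
    have h1 : (fun x' : R3 => ψ ((Rn n).symm (x' - x)))
        =ᵐ[(volume : Measure R3)] fun x' : R3 => ψ' ((Rn n).symm (x' - x)) :=
      hqm.ae_eq_comp hψe
    refine integral_congr_ae ?_
    filter_upwards [h1, hfe] with x' h1' h2'
    rw [h1', h2']
  refine Filter.Eventually.of_forall fun ω => ?_
  have hA : (fun x => ∫ n, OScore Rn ψ f x n ∂σS2) = fun x => ∫ n, OScore Rn ψ' f' x n ∂σS2 := by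
    funext x
    exact integral_congr_ae (Filter.Eventually.of_forall fun n => hOS x n)
  rw [hA, hN ω, hFf ω, OSHelper.main_meas ψ' f' hψ'm hf'm hψ'1 hf'1 Rn hmeas ω]
end
end
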